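/- Let M be an expanding n×n integer matrix, Δ a digit set for M with Q = G(M,Δ), and Λ ⊆ ℤⁿ a finite set with 0 ∈ Λ; let Γ = { ∑_{j=1}^∞ M^{−j} γ_j : γ_j ∈ Λ for all j }. Then each of the following two sets is an invariant set: (a) S₀ = { a ∈ ℤⁿ : |(a + Q) ∩ Γ| > 0 }, and (b) S̄₀ = { a ∈ ℤⁿ : (a + Q) ∩ Γ ≠ ∅ }. -/

import Mathlib

open MeasureTheory Metric Filter Set Pointwise
open scoped NNReal ENNReal

/-- The point of `EuclideanSpace ℝ (Fin n)` with the integer coordinates `a`. -/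
noncomputable def intVec {n : ℕ} (a : Fin n → ℤ) : EuclideanSpace ℝ (Fin n) :=
  (EuclideanSpace.equiv (Fin n) ℝ).symm (fun i => (a i : ℝ))

/-- An integer matrix is expanding if all its (complex) eigenvalues have modulus `> 1`. -/
def IsExpanding {n : ℕ} (M : Matrix (Fin n) (Fin n) ℤ) : Prop :=
  ∀ μ : ℂ, (M.map (Int.cast : ℤ → ℂ)).charpoly.IsRoot μ → 1 < ‖μ‖

/-- `D ⊆ ℤⁿ` is a digit set for `M`: `0 ∈ D`, `|D| = |det M|`, and the elements of `D` are
pairwise non-congruent modulo the sublattice `Mℤⁿ`. -/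
def IsDigitSet {n : ℕ} (M : Matrix (Fin n) (Fin n) ℤ) (D : Finset (Fin n → ℤ)) : Prop :=
  0 ∈ D ∧ D.card = M.det.natAbs ∧
    ∀ d₁ ∈ D, ∀ d₂ ∈ D, (∃ z : Fin n → ℤ, d₁ - d₂ = M.mulVec z) → d₁ = d₂

/-- The attractor `G(M,D) = { ∑_{k=1}^∞ M^{-k} a_k : a_k ∈ D }`. -/
noncomputable def attractor {n : ℕ} (M : Matrix (Fin n) (Fin n) ℤ) (D : Finset (Fin n → ℤ)) :
    Set (EuclideanSpace ℝ (Fin n)) :=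
  {x | ∃ a : ℕ → (Fin n → ℤ), (∀ k, a k ∈ D) ∧
    x = (EuclideanSpace.equiv (Fin n) ℝ).symm
      (∑' k : ℕ, ((M.map (Int.cast : ℤ → ℝ))⁻¹ ^ (k + 1)).mulVec (fun i => ((a k i : ℝ))))}

/-- A set `S ⊆ ℤⁿ` is invariant (w.r.t. `M`, a set `Λ` and digits `Δ`) if for every `s ∈ S`,
`γ ∈ Λ`, `δ ∈ Δ`, whenever `M⁻¹(s + γ - δ)` is an integer point, it belongs to `S`. -/
def IsInvariantSet {n : ℕ} (M : Matrix (Fin n) (Fin n) ℤ) (Λ Δ : Finset (Fin n → ℤ))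
    (S : Set (Fin n → ℤ)) : Prop :=
  ∀ s ∈ S, ∀ γ ∈ Λ, ∀ δ ∈ Δ, ∀ x : Fin n → ℤ, M.mulVec x = s + γ - δ → x ∈ S

namespace InvAux

open Matrix

attribute [local instance] Matrix.linftyOpNormedRing Matrix.linftyOpNormedAlgebra

variable {n : ℕ}

lemma eval_charpoly (A : Matrix (Fin n) (Fin n) ℂ) (μ : ℂ) :
    A.charpoly.eval μ = (μ • (1 : Matrix (Fin n) (Fin n) ℂ) - A).det := by
  rw [Matrix.charpoly, eval_det]
  congr 1
  ext i j
  by_cases h : i = j <;> simp [charmatrix, h, Matrix.one_apply, Matrix.diagonal_apply]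

variable {M : Matrix (Fin n) (Fin n) ℤ}

lemma mc_eq : M.map (Int.cast : ℤ → ℂ)
    = Complex.ofRealHom.mapMatrix (M.map (Int.cast : ℤ → ℝ)) := by
  ext i j; simp [Matrix.map_apply]

lemma det_ne (hM : IsExpanding M) : (M.map (Int.cast : ℤ → ℝ)).det ≠ 0 := by
  intro h
  have hroot : (M.map (Int.cast : ℤ → ℂ)).charpoly.IsRoot 0 := by
    have hc : (M.map (Int.cast : ℤ → ℂ)).det = 0 := by
      rw [mc_eq (M := M), ← RingHom.map_det Complex.ofRealHom, h]
      simp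
    simp [Polynomial.IsRoot, eval_charpoly, Matrix.det_neg, hc]
  have := hM 0 hroot
  simp only [norm_zero] at this
  linarith

lemma spec_lt (hM : IsExpanding M) :
    ∀ μ ∈ spectrum ℂ (Complex.ofRealHom.mapMatrix ((M.map (Int.cast : ℤ → ℝ))⁻¹)), ‖μ‖₊ < 1 := by
  intro μ hμ
  set Mr := M.map (Int.cast : ℤ → ℝ) with hMrdef
  set Ac := Complex.ofRealHom.mapMatrix (Mr⁻¹) with hAcdef
  set Mc := M.map (Int.cast : ℤ → ℂ) with hMcdef
  have hu : IsUnit Mr.det := isUnit_iff_ne_zero.mpr (det_ne hM)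
  have hAM : Ac * Mc = 1 := by
    rw [hMcdef, mc_eq, hAcdef, ← _root_.map_mul, Matrix.nonsing_inv_mul _ hu, _root_.map_one]
  have hMA : Mc * Ac = 1 := by
    rw [hMcdef, mc_eq, hAcdef, ← _root_.map_mul, Matrix.mul_nonsing_inv _ hu, _root_.map_one]
  have hunit : IsUnit Ac := ⟨⟨Ac, Mc, hAM, hMA⟩, rfl⟩
  have hμ0 : μ ≠ 0 := by
    rintro rfl
    exact (spectrum.zero_mem_iff ℂ).mp hμ hunit
  have hdet0 : (μ • (1 : Matrix (Fin n) (Fin n) ℂ) - Ac).det = 0 := by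
    rw [spectrum.mem_iff, Algebra.algebraMap_eq_smul_one] at hμ
    by_contra hd
    exact hμ ((Matrix.isUnit_iff_isUnit_det _).mpr (isUnit_iff_ne_zero.mpr hd))
  have key : (μ⁻¹ • (1 : Matrix (Fin n) (Fin n) ℂ) - Mc).det = 0 := by
    have h1 : (μ • (1 : Matrix (Fin n) (Fin n) ℂ) - Ac) * Mc
        = (-μ) • (μ⁻¹ • (1 : Matrix (Fin n) (Fin n) ℂ) - Mc) := by
      rw [Matrix.sub_mul, Matrix.smul_mul, Matrix.one_mul, hAM, smul_sub, smul_smul,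
        neg_mul, mul_inv_cancel₀ hμ0]
      simp only [neg_smul, one_smul]
      abel
    have h2 := congrArg Matrix.det h1
    rw [Matrix.det_mul, hdet0, zero_mul, Matrix.det_smul] at h2
    have hne : (-μ) ^ Fintype.card (Fin n) ≠ 0 := pow_ne_zero _ (neg_ne_zero.mpr hμ0)
    exact (mul_eq_zero.mp h2.symm).resolve_left hne
  have hroot : Mc.charpoly.IsRoot μ⁻¹ := by
    rw [Polynomial.IsRoot, eval_charpoly, key]
  have h1 := hM μ⁻¹ hroot
  rw [norm_inv] at h1
  have habs : ‖μ‖ < 1 := by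
    by_contra hge
    push_neg at hge
    have : ‖μ‖⁻¹ ≤ 1 := inv_le_one_of_one_le₀ hge
    linarith
  rw [← NNReal.coe_lt_coe]
  simpa using habs

lemma exists_geom (hM : IsExpanding M) :
    ∃ r : ℝ≥0, r < 1 ∧ ∀ᶠ k in atTop, ‖(M.map (Int.cast : ℤ → ℝ))⁻¹ ^ k‖₊ ≤ r ^ k := by
  set A := (M.map (Int.cast : ℤ → ℝ))⁻¹ with hAdef
  set Ac := Complex.ofRealHom.mapMatrix A with hAcdef
  have hnorm : ∀ k : ℕ, ‖A ^ k‖₊ = ‖Ac ^ k‖₊ := by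
    intro k
    have hpow : Ac ^ k = Complex.ofRealHom.mapMatrix (A ^ k) := by
      rw [hAcdef, ← map_pow]
    rw [hpow]
    simp only [Matrix.linfty_opNNNorm_def, RingHom.mapMatrix_apply, Matrix.map_apply]
    congr 1
    funext i
    congr 1
    funext j
    simp [Complex.nnnorm_real]
  have hρ : spectralRadius ℂ Ac < 1 := by
    rcases Nat.eq_zero_or_pos n with h | h
    · subst h
      haveI : Subsingleton (Matrix (Fin 0) (Fin 0) ℂ) :=
        ⟨fun a b => by ext i j; exact i.elim0⟩
      rw [spectrum.SpectralRadius.of_subsingleton]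
      exact zero_lt_one
    · haveI : Nonempty (Fin n) := ⟨⟨0, h⟩⟩
      haveI : Nontrivial (Matrix (Fin n) (Fin n) ℂ) := Matrix.nonempty
      have := spectrum.spectralRadius_lt_of_forall_lt Ac (r := 1) (spec_lt hM)
      simpa using this
  obtain ⟨c, hc1, hc2⟩ := exists_between hρ
  have hcT : c ≠ ⊤ := (hc2.trans_le le_top).ne
  have hev : ∀ᶠ (k : ℕ) in atTop, (‖Ac ^ k‖₊ : ENNReal) ^ (1 / (k : ℝ)) < c :=
    (spectrum.pow_nnnorm_pow_one_div_tendsto_nhds_spectralRadius Ac).eventually_lt_const hc1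
  refine ⟨c.toNNReal, ?_, ?_⟩
  · rw [← ENNReal.coe_lt_coe, ENNReal.coe_toNNReal hcT]
    simpa using hc2
  · filter_upwards [hev, eventually_ge_atTop 1] with k hk hk1
    have hk0 : (k : ℝ) ≠ 0 := by positivity
    have h3 : ((‖Ac ^ k‖₊ : ENNReal) ^ (1 / (k : ℝ))) ^ (k : ℝ) ≤ c ^ (k : ℝ) :=
      ENNReal.rpow_le_rpow hk.le (by positivity)
    rw [← ENNReal.rpow_mul, one_div, inv_mul_cancel₀ hk0, ENNReal.rpow_one] at h3
    rw [← ENNReal.coe_le_coe, ENNReal.coe_pow, ENNReal.coe_toNNReal hcT, hnorm]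
    rw [ENNReal.rpow_natCast] at h3
    exact h3

lemma summable_aux (hM : IsExpanding M) (b : ℕ → Fin n → ℝ) (B : ℝ)
    (hb : ∀ k, ‖b k‖ ≤ B) :
    Summable (fun k => ((M.map (Int.cast : ℤ → ℝ))⁻¹ ^ (k + 1)).mulVec (b k)) := by
  obtain ⟨r, hr1, hr⟩ := exists_geom hM
  have hB0 : 0 ≤ B := (norm_nonneg _).trans (hb 0)
  apply Summable.of_norm_bounded_eventually_nat (g := fun k => (B * r) * (r : ℝ) ^ k)
  · exact (summable_geometric_of_lt_one r.coe_nonneg hr1).mul_left _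
  · obtain ⟨N, hN⟩ := eventually_atTop.mp hr
    refine eventually_atTop.mpr ⟨N, fun k hk => ?_⟩
    have h1 : ‖(M.map (Int.cast : ℤ → ℝ))⁻¹ ^ (k + 1)‖ ≤ (r : ℝ) ^ (k + 1) := by
      have := hN (k + 1) (by omega)
      rw [← NNReal.coe_le_coe] at this
      simpa using this
    calc ‖((M.map (Int.cast : ℤ → ℝ))⁻¹ ^ (k + 1)).mulVec (b k)‖
        ≤ ‖(M.map (Int.cast : ℤ → ℝ))⁻¹ ^ (k + 1)‖ * ‖b k‖ :=
          Matrix.linfty_opNorm_mulVec _ _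
      _ ≤ (r : ℝ) ^ (k + 1) * B := by
          apply mul_le_mul h1 (hb k) (norm_nonneg _) (by positivity)
      _ = (B * r) * (r : ℝ) ^ k := by ring

lemma digit_bound (D : Finset (Fin n → ℤ)) :
    ∃ B : ℝ, ∀ d ∈ D, ‖(fun i => (d i : ℝ) : Fin n → ℝ)‖ ≤ B := by
  refine ⟨(D.sup fun d => ‖(fun i => (d i : ℝ) : Fin n → ℝ)‖₊ : ℝ≥0), fun d hd => ?_⟩
  have := Finset.le_sup (f := fun d => ‖(fun i => (d i : ℝ) : Fin n → ℝ)‖₊) hd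
  rw [← NNReal.coe_le_coe] at this
  simpa [← coe_nnnorm] using this


lemma cast_mulVec (M : Matrix (Fin n) (Fin n) ℤ) (v : Fin n → ℤ) :
    (M.map (Int.cast : ℤ → ℝ)).mulVec (fun i => (v i : ℝ)) = fun i => ((M.mulVec v) i : ℝ) := by
  funext i
  simp only [Matrix.mulVec, dotProduct, Matrix.map_apply]
  push_cast
  rfl

lemma attractor_step (hM : IsExpanding M) (D : Finset (Fin n → ℤ))
    {q : EuclideanSpace ℝ (Fin n)} (hq : q ∈ attractor M D) {d : Fin n → ℤ} (hd : d ∈ D) :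
    (EuclideanSpace.equiv (Fin n) ℝ).symm
      (((M.map (Int.cast : ℤ → ℝ))⁻¹).mulVec
        ((fun i => (d i : ℝ)) + (EuclideanSpace.equiv (Fin n) ℝ) q)) ∈ attractor M D := by
  obtain ⟨a, ha, rfl⟩ := hq
  obtain ⟨B, hB⟩ := digit_bound D
  set A := (M.map (Int.cast : ℤ → ℝ))⁻¹ with hA
  have hsa : Summable (fun k => (A ^ (k + 1)).mulVec (fun i => ((a k) i : ℝ))) :=
    summable_aux hM _ B (fun k => hB _ (ha k))
  set b : ℕ → (Fin n → ℤ) := fun k => Nat.rec d (fun m _ => a m) k with hb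
  have hb0 : b 0 = d := rfl
  have hbs : ∀ k, b (k + 1) = a k := fun k => rfl
  refine ⟨b, fun k => ?_, ?_⟩
  · cases k with
    | zero => exact hd
    | succ m => exact ha m
  · have hsb : Summable (fun k => (A ^ (k + 1)).mulVec (fun i => ((b k) i : ℝ))) := by
      refine summable_aux hM _ B fun k => ?_
      cases k with
      | zero => exact hB d hd
      | succ m => exact hB _ (ha m)
    have happ := (EuclideanSpace.equiv (Fin n) ℝ).apply_symm_apply
      (∑' k : ℕ, (A ^ (k + 1)).mulVec (fun i => ((a k) i : ℝ)))
    rw [happ]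
    congr 1
    rw [hsb.tsum_eq_zero_add, Matrix.mulVec_add]
    set L := LinearMap.toContinuousLinearMap (Matrix.mulVecLin A) with hLdef
    have hL : ∀ w, L w = A.mulVec w := fun w => rfl
    have hmain : ∑' (k : ℕ), (A ^ (k + 1 + 1)).mulVec (fun i => ((b (k + 1)) i : ℝ))
        = A.mulVec (∑' (k : ℕ), (A ^ (k + 1)).mulVec (fun i => ((a k) i : ℝ))) := by
      calc ∑' (k : ℕ), (A ^ (k + 1 + 1)).mulVec (fun i => ((b (k + 1)) i : ℝ))
          = ∑' (k : ℕ), L ((A ^ (k + 1)).mulVec (fun i => ((a k) i : ℝ))) := by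
            refine tsum_congr fun k => ?_
            rw [hL, Matrix.mulVec_mulVec, ← pow_succ']
          _ = L (∑' (k : ℕ), (A ^ (k + 1)).mulVec (fun i => ((a k) i : ℝ))) :=
            (L.map_tsum hsa).symm
          _ = A.mulVec (∑' (k : ℕ), (A ^ (k + 1)).mulVec (fun i => ((a k) i : ℝ))) := hL _
    rw [hmain]
    simp [hb0]

lemma volume_image_affine (A : Matrix (Fin n) (Fin n) ℝ) (t : EuclideanSpace ℝ (Fin n))
    (s : Set (EuclideanSpace ℝ (Fin n))) :
    volume ((fun y => t + (EuclideanSpace.equiv (Fin n) ℝ).symm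
        (A.mulVec ((EuclideanSpace.equiv (Fin n) ℝ) y))) '' s)
      = ENNReal.ofReal |A.det| * volume s := by
  set Lm : EuclideanSpace ℝ (Fin n) →ₗ[ℝ] EuclideanSpace ℝ (Fin n) :=
    (((EuclideanSpace.equiv (Fin n) ℝ).symm.toLinearEquiv :
        (Fin n → ℝ) ≃ₗ[ℝ] EuclideanSpace ℝ (Fin n)) : (Fin n → ℝ) →ₗ[ℝ] EuclideanSpace ℝ (Fin n)) ∘ₗ
      (Matrix.mulVecLin A) ∘ₗ
      (((EuclideanSpace.equiv (Fin n) ℝ).toLinearEquiv :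
        EuclideanSpace ℝ (Fin n) ≃ₗ[ℝ] (Fin n → ℝ)) : EuclideanSpace ℝ (Fin n) →ₗ[ℝ] (Fin n → ℝ))
    with hLm
  have hdet : LinearMap.det Lm = A.det := by
    rw [hLm]
    have h := LinearMap.det_conj A.mulVecLin
      ((EuclideanSpace.equiv (Fin n) ℝ).symm.toLinearEquiv :
        (Fin n → ℝ) ≃ₗ[ℝ] EuclideanSpace ℝ (Fin n))
    rw [show ((((EuclideanSpace.equiv (Fin n) ℝ).symm.toLinearEquiv :
        (Fin n → ℝ) ≃ₗ[ℝ] EuclideanSpace ℝ (Fin n))).symm)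
      = ((EuclideanSpace.equiv (Fin n) ℝ).toLinearEquiv :
        EuclideanSpace ℝ (Fin n) ≃ₗ[ℝ] (Fin n → ℝ)) from rfl] at h
    rw [h, ← Matrix.toLin'_apply', LinearMap.det_toLin']
  have hsplit : (fun y => t + (EuclideanSpace.equiv (Fin n) ℝ).symm
      (A.mulVec ((EuclideanSpace.equiv (Fin n) ℝ) y))) '' s = (fun z => t + z) '' (Lm '' s) := by
    rw [← Set.image_comp]
    rfl
  rw [hsplit]
  have htrans : volume ((fun z => t + z) '' (Lm '' s)) = volume (Lm '' s) := by
    rw [Set.image_add_left, measure_preimage_add]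
  rw [htrans, MeasureTheory.Measure.addHaar_image_linearMap, hdet]

end InvAux

/-- Both `S₀ = {a : |(a+Q) ∩ Γ| > 0}` and `S̄₀ = {a : (a+Q) ∩ Γ ≠ ∅}` are invariant sets. -/
theorem isInvariantSet_S0_and_S0bar {n : ℕ} (M : Matrix (Fin n) (Fin n) ℤ)
    (hM : IsExpanding M) (Δ : Finset (Fin n → ℤ)) (hΔ : IsDigitSet M Δ)
    (Λ : Finset (Fin n → ℤ)) (hΛ : (0 : Fin n → ℤ) ∈ Λ) :
    IsInvariantSet M Λ Δ {a : Fin n → ℤ |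
        0 < volume (((fun x => intVec a + x) '' attractor M Δ) ∩ attractor M Λ)} ∧
    IsInvariantSet M Λ Δ {a : Fin n → ℤ |
        (((fun x => intVec a + x) '' attractor M Δ) ∩ attractor M Λ).Nonempty} := by
  have hdet : (M.map (Int.cast : ℤ → ℝ)).det ≠ 0 := InvAux.det_ne hM
  have hAM : (M.map (Int.cast : ℤ → ℝ))⁻¹ * (M.map (Int.cast : ℤ → ℝ)) = 1 :=
    Matrix.nonsing_inv_mul _ (isUnit_iff_ne_zero.mpr hdet)
  have hAdet : ((M.map (Int.cast : ℤ → ℝ))⁻¹).det ≠ 0 :=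
    Matrix.det_ne_zero_of_right_inverse hAM
  set A := (M.map (Int.cast : ℤ → ℝ))⁻¹ with hA
  have key : ∀ (s x γ δ : Fin n → ℤ), γ ∈ Λ → δ ∈ Δ → M.mulVec x = s + γ - δ →
      ∀ y ∈ ((fun z => intVec s + z) '' attractor M Δ) ∩ attractor M Λ,
        (EuclideanSpace.equiv (Fin n) ℝ).symm
            (A.mulVec ((fun i => (γ i : ℝ)) + (EuclideanSpace.equiv (Fin n) ℝ) y))
          ∈ ((fun z => intVec x + z) '' attractor M Δ) ∩ attractor M Λ := by
    rintro s x γ δ hγ hδ hx y ⟨⟨q, hq, rfl⟩, hyΓ⟩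
    constructor
    · refine ⟨(EuclideanSpace.equiv (Fin n) ℝ).symm
        (A.mulVec ((fun i => (δ i : ℝ)) + (EuclideanSpace.equiv (Fin n) ℝ) q)),
        InvAux.attractor_step hM Δ hq hδ, ?_⟩
      have h1 : (M.map (Int.cast : ℤ → ℝ)).mulVec (fun i => (x i : ℝ))
          = ((fun i => (s i : ℝ)) + (fun i => (γ i : ℝ)) - fun i => (δ i : ℝ)) := by
        rw [InvAux.cast_mulVec, hx]
        funext i
        simp only [Pi.add_apply, Pi.sub_apply]
        push_cast
        ring
      have h2 : A.mulVec ((fun i => (s i : ℝ)) + (fun i => (γ i : ℝ)) - fun i => (δ i : ℝ))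
          = fun i => (x i : ℝ) := by
        rw [← h1, Matrix.mulVec_mulVec, hAM, Matrix.one_mulVec]
      have h3 : (EuclideanSpace.equiv (Fin n) ℝ) (intVec s + q)
          = (fun i => (s i : ℝ)) + (EuclideanSpace.equiv (Fin n) ℝ) q := by
        rw [map_add]
        congr 1
      rw [h3]
      have h4 : ((fun i => (γ i : ℝ)) + ((fun i => (s i : ℝ))
            + (EuclideanSpace.equiv (Fin n) ℝ) q))
          = ((fun i => (s i : ℝ)) + (fun i => (γ i : ℝ)) - fun i => (δ i : ℝ))
            + ((fun i => (δ i : ℝ)) + (EuclideanSpace.equiv (Fin n) ℝ) q) := by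
        abel
      rw [h4]
      simp only [Matrix.mulVec_add]
      rw [h2]
      simp only [map_add]
      rfl
    · exact InvAux.attractor_step hM Λ hyΓ hγ
  constructor
  · rintro s hs γ hγ δ hδ x hx
    simp only [Set.mem_setOf_eq] at hs ⊢
    set φ : EuclideanSpace ℝ (Fin n) → EuclideanSpace ℝ (Fin n) := fun y =>
      (EuclideanSpace.equiv (Fin n) ℝ).symm
        (A.mulVec ((fun i => (γ i : ℝ)) + (EuclideanSpace.equiv (Fin n) ℝ) y)) with hφ
    have himg : φ '' (((fun z => intVec s + z) '' attractor M Δ) ∩ attractor M Λ)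
        ⊆ ((fun z => intVec x + z) '' attractor M Δ) ∩ attractor M Λ := by
      rintro _ ⟨y, hy, rfl⟩
      exact key s x γ δ hγ hδ hx y hy
    have hφ2 : φ = fun y => (EuclideanSpace.equiv (Fin n) ℝ).symm
        (A.mulVec (fun i => (γ i : ℝ)))
        + (EuclideanSpace.equiv (Fin n) ℝ).symm
          (A.mulVec ((EuclideanSpace.equiv (Fin n) ℝ) y)) := by
      funext y
      simp only [hφ, Matrix.mulVec_add, map_add]
    have hvol : volume (φ '' (((fun z => intVec s + z) '' attractor M Δ) ∩ attractor M Λ))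
        = ENNReal.ofReal |A.det|
          * volume (((fun z => intVec s + z) '' attractor M Δ) ∩ attractor M Λ) := by
      rw [hφ2]
      exact InvAux.volume_image_affine A _ _
    calc (0 : ENNReal)
        < ENNReal.ofReal |A.det|
          * volume (((fun z => intVec s + z) '' attractor M Δ) ∩ attractor M Λ) :=
          ENNReal.mul_pos (ENNReal.ofReal_pos.mpr (abs_pos.mpr hAdet)).ne' hs.ne'
      _ = volume (φ '' (((fun z => intVec s + z) '' attractor M Δ) ∩ attractor M Λ)) :=
          hvol.symm
      _ ≤ volume (((fun z => intVec x + z) '' attractor M Δ) ∩ attractor M Λ) :=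
          measure_mono himg
  · rintro s hs γ hγ δ hδ x hx
    obtain ⟨y, hy⟩ := hs
    exact ⟨_, key s x γ δ hγ hδ hx y hy⟩
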